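/- Let Φ be a Young function and φ ∈ G₀∩G₁^dec (i.e. φ is almost decreasing, submultiplicative, lim_{r→0}φ(r)=∞ and lim_{r→∞}φ(r)=0). Assume that for every C>0 the function r ↦ 1/(φ(r)Φ⁻¹(Cr)) is almost decreasing. Then for every M>0 there exists δ>0 such that for all 0 < α₁ ≤ α₂ ≤ … ≤ αₙ with α₁ < δ, the composition operator of the diagonal matrix diag(α₁,…,αₙ) satisfies ‖C_{diag(α₁,…,αₙ)}‖_{M_Φ^φ→M_Φ^φ} > M; in other words, liminf_{α₁→0}‖C_{diag(α₁,…,αₙ)}‖_{M_Φ^φ→M_Φ^φ} = ∞. -/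

import Mathlib

open MeasureTheory Filter Set
open scoped ENNReal NNReal

noncomputable section

/-- A Young function: convex on `[0,∞)`, vanishing at `0`, nonnegative, tending to `∞`. -/
def IsYoung (Φ : ℝ → ℝ) : Prop :=
  ConvexOn ℝ (Set.Ici 0) Φ ∧ Φ 0 = 0 ∧ (∀ t, 0 ≤ t → 0 ≤ Φ t) ∧
    Filter.Tendsto Φ Filter.atTop Filter.atTop

/-- Almost decreasing on `(0,∞)`: `g s ≤ C * g r` whenever `0 < r < s`. -/
def AlmostDecreasingOn (g : ℝ → ℝ) : Prop :=
  ∃ C > 0, ∀ r s : ℝ, 0 < r → r < s → g s ≤ C * g r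

/-- Almost increasing on `(0,∞)`: `g r ≤ C * g s` whenever `0 < r < s`. -/
def AlmostIncreasingOn (g : ℝ → ℝ) : Prop :=
  ∃ C > 0, ∀ r s : ℝ, 0 < r → r < s → g r ≤ C * g s

/-- The class `G₁^dec`: positive, almost decreasing and submultiplicative on `(0,∞)`. -/
def G1dec (φ : ℝ → ℝ) : Prop :=
  (∀ r : ℝ, 0 < r → 0 < φ r) ∧ AlmostDecreasingOn φ ∧
    ∃ C > 0, ∀ r s : ℝ, 0 < r → 0 < s → φ (r * s) ≤ C * φ r * φ s

/-- The class `G₂^dec`: `φ ∈ G₀ ∩ G₁^dec` and `φ(1/r) ≤ C/φ(r)`. -/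
def G2dec (φ : ℝ → ℝ) : Prop :=
  G1dec φ ∧ Filter.Tendsto φ (nhdsWithin 0 (Set.Ioi 0)) Filter.atTop ∧
    Filter.Tendsto φ Filter.atTop (nhds 0) ∧
    ∃ C > 0, ∀ r : ℝ, 0 < r → φ r⁻¹ ≤ C / φ r

/-- Generalized inverse of a Young function: `Φ⁻¹(u) = inf {t ≥ 0 : Φ(t) > u}`. -/
def yInv (Φ : ℝ → ℝ) (u : ℝ) : ℝ := sInf {t : ℝ | 0 ≤ t ∧ u < Φ t}

/-- The Luxemburg-type norm of `f` on the ball `B(a,r)`: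
`inf {λ > 0 : (1/|B|) ∫_B Φ(|f|/λ) ≤ 1}` (as an extended nonnegative real). -/
def ballLux {n : ℕ} (Φ : ℝ → ℝ) (a : EuclideanSpace ℝ (Fin n)) (r : ℝ)
    (f : EuclideanSpace ℝ (Fin n) → ℝ) : ℝ≥0∞ :=
  sInf {lam : ℝ≥0∞ | ∃ l : ℝ, 0 < l ∧ lam = ENNReal.ofReal l ∧
    (∫ x in Metric.ball a r, Φ (|f x| / l)) ≤ (volume (Metric.ball a r)).toReal}

/-- The Orlicz–Morrey norm `‖f‖_{M_Φ^φ} = sup_{a, r>0} (1/φ(r)) ‖f‖_{Φ,B(a,r)}`. -/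
def omNorm {n : ℕ} (Φ φ : ℝ → ℝ) (f : EuclideanSpace ℝ (Fin n) → ℝ) : ℝ≥0∞ :=
  ⨆ (a : EuclideanSpace ℝ (Fin n)) (r : ℝ) (_ : 0 < r),
    (ENNReal.ofReal (φ r))⁻¹ * ballLux Φ a r f

/-- Operator norm of the composition operator `C_ψ` on the Orlicz–Morrey space. -/
def opNorm {n : ℕ} (Φ φ : ℝ → ℝ)
    (ψ : EuclideanSpace ℝ (Fin n) → EuclideanSpace ℝ (Fin n)) : ℝ≥0∞ :=
  ⨆ (f : EuclideanSpace ℝ (Fin n) → ℝ) (_ : omNorm Φ φ f ≠ 0),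
    omNorm Φ φ (f ∘ ψ) / omNorm Φ φ f

/-- The linear action of a matrix `M` on Euclidean space. -/
def matAction {n : ℕ} (M : Matrix (Fin n) (Fin n) ℝ) (x : EuclideanSpace ℝ (Fin n)) :
    EuclideanSpace ℝ (Fin n) :=
  (EuclideanSpace.equiv (Fin n) ℝ).symm (M.mulVec (EuclideanSpace.equiv (Fin n) ℝ x))

end

section Aux

variable {Φ : ℝ → ℝ}

/-- Convexity estimate: `Φ s ≤ (s/t) Φ t` for `0 ≤ s ≤ t`. -/
lemma young_scale (hΦ : IsYoung Φ) {s t : ℝ} (hs : 0 ≤ s) (hst : s ≤ t) (ht : 0 < t) :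
    Φ s ≤ (s / t) * Φ t := by
  have hd1 : (0:ℝ) ≤ 1 - s / t := by
    have : s / t ≤ 1 := (div_le_one ht).2 hst
    linarith
  have hd2 : (0:ℝ) ≤ s / t := by positivity
  have h := hΦ.1.2 (Set.mem_Ici.2 (le_refl (0:ℝ))) (Set.mem_Ici.2 ht.le) hd1 hd2
    (by ring : (1 - s / t) + s / t = 1)
  simp only [smul_eq_mul, mul_zero, zero_add] at h
  have hst' : s / t * t = s := div_mul_cancel₀ s ht.ne'
  rw [hst'] at h
  calc Φ s ≤ (1 - s / t) * Φ 0 + s / t * Φ t := h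
    _ = (s / t) * Φ t := by rw [hΦ.2.1]; ring

lemma young_mono (hΦ : IsYoung Φ) {s t : ℝ} (hs : 0 ≤ s) (hst : s ≤ t) : Φ s ≤ Φ t := by
  rcases eq_or_lt_of_le (hs.trans hst) with h | ht
  · have : s = t := le_antisymm hst (by rw [← h] at hst ⊢; linarith)
    rw [this]
  · calc Φ s ≤ (s / t) * Φ t := young_scale hΦ hs hst ht
      _ ≤ 1 * Φ t := by
          apply mul_le_mul_of_nonneg_right _ (hΦ.2.2.1 t (hs.trans hst))
          exact (div_le_one ht).2 hst
      _ = Φ t := one_mul _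

lemma young_exists_t1 (hΦ : IsYoung Φ) : ∃ t₁ > 0, Φ t₁ ≤ 1 := by
  rcases le_or_gt (Φ 1) 1 with h | h
  · exact ⟨1, one_pos, h⟩
  · have hΦ1 : 0 < Φ 1 := lt_trans one_pos h
    refine ⟨1 / Φ 1, by positivity, ?_⟩
    have := young_scale hΦ (s := 1 / Φ 1) (t := 1) (by positivity)
      (by rw [div_le_one hΦ1]; linarith) one_pos
    calc Φ (1/Φ 1) ≤ (1/Φ 1/1) * Φ 1 := this
      _ = 1 := by field_simp
  
lemma young_exists_t2 (hΦ : IsYoung Φ) : ∃ t₂ > 0, 1 < Φ t₂ := by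
  have := hΦ.2.2.2.eventually_gt_atTop 1
  rcases (this.and (eventually_gt_atTop 0)).exists with ⟨t, h1, h2⟩
  exact ⟨t, h2, h1⟩

lemma yInv_pos (hΦ : IsYoung Φ) {u : ℝ} (hu : 0 < u) : 0 < yInv Φ u := by
  have hne : {t : ℝ | 0 ≤ t ∧ u < Φ t}.Nonempty := by
    have := hΦ.2.2.2.eventually_gt_atTop u
    rcases (this.and (eventually_ge_atTop 0)).exists with ⟨t, h1, h2⟩
    exact ⟨t, h2, h1⟩
  rcases le_or_gt (Φ 1) 0 with h1 | h1
  · have : (1:ℝ) ≤ yInv Φ u := by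
      apply le_csInf hne
      rintro t ⟨ht0, htu⟩
      by_contra hlt
      push_neg at hlt
      have : Φ t ≤ Φ 1 := young_mono hΦ ht0 hlt.le
      linarith
    linarith
  · have hm : 0 < min 1 (u / Φ 1) := lt_min one_pos (by positivity)
    have : min 1 (u / Φ 1) ≤ yInv Φ u := by
      apply le_csInf hne
      rintro t ⟨ht0, htu⟩
      rcases le_or_gt 1 t with h | h
      · exact le_trans (min_le_left _ _) h
      · have := young_scale hΦ ht0 h.le one_pos
        have htu' : u < (t / 1) * Φ 1 := lt_of_lt_of_le htu this
        have : u / Φ 1 < t := by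
          rw [div_lt_iff₀ h1]
          calc u < (t/1) * Φ 1 := htu'
            _ = t * Φ 1 := by ring
        exact le_trans (min_le_right _ _) this.le
    linarith [lt_of_lt_of_le hm this]

lemma yInv_spec (hΦ : IsYoung Φ) {u t : ℝ} (ht : 0 ≤ t) (h : t < yInv Φ u) : Φ t ≤ u := by
  have hbdd : BddBelow {s : ℝ | 0 ≤ s ∧ u < Φ s} := ⟨0, fun s hs => hs.1⟩
  have := notMem_of_lt_csInf h hbdd
  simp only [Set.mem_setOf_eq, not_and, not_lt] at this
  exact this ht

lemma euclidean_coord_le_norm {n : ℕ} (x : EuclideanSpace ℝ (Fin n)) (i : Fin n) :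
    |x i| ≤ ‖x‖ := by
  rw [EuclideanSpace.norm_eq]
  rw [← Real.sqrt_sq_eq_abs]
  apply Real.sqrt_le_sqrt
  apply Finset.single_le_sum (f := fun j => ‖x j‖ ^ 2) (fun j _ => by positivity)
    (Finset.mem_univ i) |>.trans_eq' ?_
  simp [Real.norm_eq_abs, sq_abs]

end Aux

section BallLemmas

variable {n : ℕ} {Φ : ℝ → ℝ}

lemma ballLux_le_of_indicator (hΦ0 : Φ 0 = 0) (hΦnn : ∀ t, 0 ≤ t → 0 ≤ Φ t)
    {T : Set (EuclideanSpace ℝ (Fin n))} (hT : MeasurableSet T)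
    (a : EuclideanSpace ℝ (Fin n)) {r t : ℝ} (hr : 0 < r) (ht : 0 < t)
    (h : ENNReal.ofReal (Φ t) * volume (T ∩ Metric.ball a r) ≤ volume (Metric.ball a r)) :
    ballLux Φ a r (T.indicator fun _ => (1:ℝ)) ≤ ENNReal.ofReal (1 / t) := by
  apply sInf_le
  refine ⟨1 / t, by positivity, rfl, ?_⟩
  have hfun : (fun x => Φ (|T.indicator (fun _ => (1:ℝ)) x| / (1 / t)))
      = T.indicator (fun _ => Φ t) := by
    funext x
    by_cases hx : x ∈ T
    · simp [Set.indicator_of_mem hx, one_div_one_div]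
    · simp [Set.indicator_of_notMem hx, hΦ0]
  rw [hfun, setIntegral_indicator hT, setIntegral_const, smul_eq_mul]
  have hvne : volume (Metric.ball a r) ≠ ⊤ := measure_ball_lt_top.ne
  have hmne : volume (T ∩ Metric.ball a r) ≠ ⊤ :=
    (lt_of_le_of_lt (measure_mono Set.inter_subset_right) measure_ball_lt_top).ne
  have := ENNReal.toReal_mono hvne h
  rw [ENNReal.toReal_mul, ENNReal.toReal_ofReal (hΦnn t ht.le)] at this
  have hcomm : Metric.ball a r ∩ T = T ∩ Metric.ball a r := Set.inter_comm _ _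
  rw [hcomm]
  rw [measureReal_def]
  linarith [this]

lemma ballLux_ge_of_one (hmono : ∀ s t : ℝ, 0 ≤ s → s ≤ t → Φ s ≤ Φ t)
    {t₂ : ℝ} (ht₂ : 0 < t₂) (hΦt₂ : 1 < Φ t₂)
    (a : EuclideanSpace ℝ (Fin n)) {r : ℝ} (hr : 0 < r)
    {f : EuclideanSpace ℝ (Fin n) → ℝ} (hf : ∀ x ∈ Metric.ball a r, f x = 1) :
    ENNReal.ofReal (1 / t₂) ≤ ballLux Φ a r f := by
  apply le_sInf
  rintro lam ⟨l, hl, rfl, hint⟩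
  have heq : (∫ x in Metric.ball a r, Φ (|f x| / l))
      = Φ (1 / l) * (volume (Metric.ball a r)).toReal := by
    rw [setIntegral_congr_fun measurableSet_ball
      (g := fun _ => Φ (1 / l)) (fun x hx => by rw [hf x hx]; norm_num)]
    rw [setIntegral_const, smul_eq_mul, mul_comm]
    rfl
  rw [heq] at hint
  have hvpos : 0 < (volume (Metric.ball a r)).toReal :=
    ENNReal.toReal_pos (Metric.measure_ball_pos volume a hr).ne' measure_ball_lt_top.ne
  have hΦl : Φ (1 / l) ≤ 1 := by
    by_contra hcon
    push_neg at hcon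
    nlinarith
  have hlt : 1 / l < t₂ := by
    by_contra hcon
    push_neg at hcon
    have := hmono t₂ (1/l) ht₂.le hcon
    linarith
  apply ENNReal.ofReal_le_ofReal
  rw [div_le_iff₀ ht₂]
  rw [div_lt_iff₀ hl] at hlt
  linarith

end BallLemmas

lemma slab_inter_ball_volume {n : ℕ} (i₀ : Fin n) (a : EuclideanSpace ℝ (Fin n)) {r : ℝ} (hr : 0 < r) :
    volume ({x : EuclideanSpace ℝ (Fin n) | |x i₀| < 1} ∩ Metric.ball a r)
      ≤ ENNReal.ofReal 2 * ENNReal.ofReal (2*r) ^ (n-1) := by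
  classical
  set box : Set (Fin n → ℝ) :=
    Set.univ.pi fun i => if i = i₀ then Set.Ioo (-1:ℝ) 1 else Set.Icc (a i - r) (a i + r) with hbox
  have hboxm : MeasurableSet box := by
    apply MeasurableSet.univ_pi
    intro i
    split
    · exact measurableSet_Ioo
    · exact measurableSet_Icc
  have hsub : {x : EuclideanSpace ℝ (Fin n) | |x i₀| < 1} ∩ Metric.ball a r ⊆
      (MeasurableEquiv.toLp 2 (Fin n → ℝ)).symm ⁻¹' box := by
    rintro x ⟨hx1, hx2⟩
    intro i _
    have hxi : (MeasurableEquiv.toLp 2 (Fin n → ℝ)).symm x i = x i := by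
      simp
    rw [hxi]
    by_cases hi : i = i₀
    · subst hi
      simp only [if_pos rfl, Set.mem_Ioo]
      exact abs_lt.1 hx1
    · simp only [if_neg hi, Set.mem_Icc]
      have h1 : |x i - a i| ≤ ‖x - a‖ := by
        have : (x - a) i = x i - a i := by simp
        rw [← this]
        rw [EuclideanSpace.norm_eq, ← Real.sqrt_sq_eq_abs]
        apply Real.sqrt_le_sqrt
        apply Finset.single_le_sum (f := fun j => ‖(x - a) j‖ ^ 2) (fun j _ => by positivity)
          (Finset.mem_univ i) |>.trans_eq' ?_
        simp [Real.norm_eq_abs, sq_abs]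
      have h2 : ‖x - a‖ < r := by
        rw [← dist_eq_norm]
        exact Metric.mem_ball.1 hx2
      have := abs_le.1 (le_of_lt (lt_of_le_of_lt h1 h2))
      constructor <;> linarith [this.1, this.2]
  calc volume ({x : EuclideanSpace ℝ (Fin n) | |x i₀| < 1} ∩ Metric.ball a r)
      ≤ volume ((MeasurableEquiv.toLp 2 (Fin n → ℝ)).symm ⁻¹' box) := measure_mono hsub
    _ = volume box := (EuclideanSpace.volume_preserving_symm_measurableEquiv_toLp (Fin n)).measure_preimage
        hboxm.nullMeasurableSet
    _ = ∏ i, volume (if i = i₀ then Set.Ioo (-1:ℝ) 1 else Set.Icc (a i - r) (a i + r)) :=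
        volume_pi_pi _
    _ = ENNReal.ofReal 2 * ENNReal.ofReal (2*r) ^ (n-1) := by
        rw [← Finset.mul_prod_erase Finset.univ _ (Finset.mem_univ i₀)]
        congr 1
        · rw [if_pos rfl, Real.volume_Ioo]; norm_num
        · rw [Finset.prod_congr rfl (fun i hi => ?_), Finset.prod_const,
            Finset.card_erase_of_mem (Finset.mem_univ i₀), Finset.card_univ, Fintype.card_fin]
          rw [if_neg (Finset.ne_of_mem_erase hi), Real.volume_Icc]
          congr 1
          ring

set_option maxHeartbeats 2000000 in
/-- Let `Φ` be Young and `φ ∈ G₀ ∩ G₁^dec`, and assume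
`r ↦ 1/(φ(r)Φ⁻¹(Cr))` is almost decreasing for every `C > 0`. Then the operator norm of
`C_{diag(α₁,…,αₙ)}` on `M_Φ^φ(ℝⁿ)` tends to `∞` as `α₁ → 0` (uniformly over
`0 < α₁ ≤ … ≤ αₙ`): for every `M > 0` there is `δ > 0` such that
`‖C_{diag(α)}‖ > M` whenever `α₁ < δ`. -/
theorem statement19 {n : ℕ} (hn : 0 < n) (Φ φ : ℝ → ℝ) (hΦ : IsYoung Φ)
    (hφ : G1dec φ)
    (hφ0 : Filter.Tendsto φ (nhdsWithin 0 (Set.Ioi 0)) Filter.atTop)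
    (hφtop : Filter.Tendsto φ Filter.atTop (nhds 0))
    (hcond : ∀ C : ℝ, 0 < C → AlmostDecreasingOn (fun r => 1 / (φ r * yInv Φ (C * r)))) :
    ∀ M : ℝ, 0 < M → ∃ δ > 0, ∀ α : Fin n → ℝ, (∀ i, 0 < α i) →
      (∀ i j : Fin n, i ≤ j → α i ≤ α j) → α ⟨0, hn⟩ < δ →
      ENNReal.ofReal M < opNorm Φ φ (matAction (Matrix.diagonal α)) := by
  intro M hM
  obtain ⟨φpos, ⟨Cd, hCd0, hCdd⟩, -⟩ := hφ
  obtain ⟨t₁, ht₁0, ht₁Φ⟩ := young_exists_t1 hΦ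
  obtain ⟨t₂, ht₂0, ht₂Φ⟩ := young_exists_t2 hΦ
  have hmonoΦ : ∀ s t : ℝ, 0 ≤ s → s ≤ t → Φ s ≤ Φ t := fun s t hs hst => young_mono hΦ hs hst
  set i₀ : Fin n := ⟨0, hn⟩ with hi₀
  set T : Set (EuclideanSpace ℝ (Fin n)) := {x | |x i₀| < 1} with hTdef
  have hT : MeasurableSet T := by
    have : T = (fun x : EuclideanSpace ℝ (Fin n) => x i₀) ⁻¹' (Set.Ioo (-1) 1) := by
      ext x; simp [hTdef, abs_lt]
    rw [this]
    exact (by fun_prop : Measurable (fun x : EuclideanSpace ℝ (Fin n) => x i₀)) measurableSet_Ioo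
  set f : EuclideanSpace ℝ (Fin n) → ℝ := T.indicator (fun _ => (1:ℝ)) with hfdef
  haveI : Nontrivial (EuclideanSpace ℝ (Fin n)) := by
    refine ⟨EuclideanSpace.single i₀ 1, 0, fun h => ?_⟩
    have := congrArg (fun v : EuclideanSpace ℝ (Fin n) => v i₀) h
    simp at this
  set ω := volume (Metric.ball (0 : EuclideanSpace ℝ (Fin n)) 1) with hωdef
  have hω0 : 0 < ω := Metric.measure_ball_pos volume _ one_pos
  have hωtop : ω ≠ ⊤ := measure_ball_lt_top.ne
  have hωr : 0 < ω.toReal := ENNReal.toReal_pos hω0.ne' hωtop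
  set c : ℝ := ω.toReal / 2 ^ n with hc
  have hc0 : 0 < c := by positivity
  obtain ⟨A, hA0, hAd⟩ := hcond c hc0
  have hφ2 : 0 < φ 2 := φpos 2 two_pos
  have hy2 : 0 < yInv Φ (c * 2) := yInv_pos hΦ (by positivity)
  set Cd' : ℝ := max Cd 1 with hCd'
  have hCd'1 : (1:ℝ) ≤ Cd' := le_max_right _ _
  have hCd'0 : (0:ℝ) < Cd' := lt_of_lt_of_le one_pos hCd'1
  set K : ℝ := max (Cd' / (φ 2 * t₁)) (2 * A / (φ 2 * yInv Φ (c*2))) with hK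
  have hK0 : 0 < K := lt_of_lt_of_le (by positivity : (0:ℝ) < Cd'/(φ 2*t₁)) (le_max_left _ _)
  have hball : ∀ (a : EuclideanSpace ℝ (Fin n)) (r : ℝ), 0 < r →
      volume (Metric.ball a r) = ENNReal.ofReal (r ^ n) * ω := by
    intro a r hr
    rw [Measure.addHaar_ball volume a hr.le, finrank_euclideanSpace_fin]
  -- Denominator bound
  have hden : omNorm Φ φ f ≤ ENNReal.ofReal K := by
    apply iSup_le; intro a; apply iSup_le; intro r; apply iSup_le; intro hr
    have hφr : 0 < φ r := φpos r hr
    rcases le_or_gt r 2 with hr2 | hr2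
    · -- small radii
      have hlux : ballLux Φ a r f ≤ ENNReal.ofReal (1/t₁) := by
        apply ballLux_le_of_indicator hΦ.2.1 hΦ.2.2.1 hT a hr ht₁0
        calc ENNReal.ofReal (Φ t₁) * volume (T ∩ Metric.ball a r)
            ≤ 1 * volume (Metric.ball a r) :=
              mul_le_mul' (ENNReal.ofReal_le_one.2 ht₁Φ) (measure_mono inter_subset_right)
          _ = volume (Metric.ball a r) := one_mul _
      calc (ENNReal.ofReal (φ r))⁻¹ * ballLux Φ a r f
          ≤ ENNReal.ofReal ((φ r)⁻¹) * ENNReal.ofReal (1/t₁) := by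
            rw [← ENNReal.ofReal_inv_of_pos hφr]
            exact mul_le_mul' le_rfl hlux
        _ = ENNReal.ofReal ((φ r)⁻¹ * (1/t₁)) := (ENNReal.ofReal_mul (by positivity)).symm
        _ ≤ ENNReal.ofReal K := by
            apply ENNReal.ofReal_le_ofReal
            have h2 : φ 2 ≤ Cd' * φ r := by
              rcases eq_or_lt_of_le hr2 with heq | hlt
              · rw [heq]; nlinarith
              · have := hCdd r 2 hr hlt
                nlinarith [le_max_left Cd (1:ℝ)]
            have hfirst : (φ r)⁻¹ * (1/t₁) ≤ Cd' / (φ 2 * t₁) := by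
              rw [show (φ r)⁻¹ * (1/t₁) = 1/(φ r * t₁) by rw [one_div, ← mul_inv, one_div]]
              rw [div_le_div_iff₀ (by positivity) (by positivity)]
              nlinarith
            exact hfirst.trans (le_max_left _ _)
    · -- large radii
      set y := yInv Φ (c*r) with hy
      have hy0 : 0 < y := yInv_pos hΦ (by positivity)
      have hΦy : Φ (y/2) ≤ c * r := yInv_spec hΦ (by positivity) (by linarith)
      have hm := slab_inter_ball_volume i₀ a hr
      obtain ⟨m, hnm⟩ : ∃ m, n = m + 1 := ⟨n - 1, (Nat.succ_pred_eq_of_pos hn).symm⟩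
      have hn1 : n - 1 = m := by omega
      have hcond2 : ENNReal.ofReal (Φ (y/2)) * volume (T ∩ Metric.ball a r)
          ≤ volume (Metric.ball a r) := by
        calc ENNReal.ofReal (Φ (y/2)) * volume (T ∩ Metric.ball a r)
            ≤ ENNReal.ofReal (c*r) * (ENNReal.ofReal 2 * ENNReal.ofReal (2*r) ^ (n-1)) :=
              mul_le_mul' (ENNReal.ofReal_le_ofReal hΦy) hm
          _ = ENNReal.ofReal (c * r * (2 * (2*r)^(n-1))) := by
              rw [← ENNReal.ofReal_pow (by positivity), ← ENNReal.ofReal_mul (by norm_num),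
                ← ENNReal.ofReal_mul (by positivity)]
          _ = ENNReal.ofReal (r ^ n * ω.toReal) := by
              congr 1
              rw [hn1, hc, hnm]
              have h2pow : (2:ℝ) ^ (m+1) ≠ 0 := by positivity
              field_simp
              ring
          _ = ENNReal.ofReal (r^n) * ω := by
              rw [ENNReal.ofReal_mul (by positivity), ENNReal.ofReal_toReal hωtop]
          _ = volume (Metric.ball a r) := (hball a r hr).symm
      have hlux : ballLux Φ a r f ≤ ENNReal.ofReal (1/(y/2)) :=
        ballLux_le_of_indicator hΦ.2.1 hΦ.2.2.1 hT a hr (by positivity) hcond2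
      calc (ENNReal.ofReal (φ r))⁻¹ * ballLux Φ a r f
          ≤ ENNReal.ofReal ((φ r)⁻¹) * ENNReal.ofReal (1/(y/2)) := by
            rw [← ENNReal.ofReal_inv_of_pos hφr]
            exact mul_le_mul' le_rfl hlux
        _ = ENNReal.ofReal ((φ r)⁻¹ * (1/(y/2))) := (ENNReal.ofReal_mul (by positivity)).symm
        _ ≤ ENNReal.ofReal K := by
            apply ENNReal.ofReal_le_ofReal
            have hAlr := hAd 2 r two_pos hr2
            simp only at hAlr
            have heq1 : (φ r)⁻¹ * (1/(y/2)) = 2 * (1 / (φ r * y)) := by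
              field_simp
            rw [heq1]
            have hstep : 2 * (1 / (φ r * y)) ≤ 2 * (A * (1 / (φ 2 * yInv Φ (c*2)))) := by
              nlinarith [hAlr]
            apply hstep.trans
            apply le_trans _ (le_max_right (Cd' / (φ 2 * t₁)) (2 * A / (φ 2 * yInv Φ (c*2))))
            exact le_of_eq (by ring)
  -- Denominator nonzero
  have hball1 : ∀ x ∈ Metric.ball (0 : EuclideanSpace ℝ (Fin n)) 1, f x = 1 := by
    intro x hx
    have hmem : x ∈ T := by
      show |x i₀| < 1
      calc |x i₀| ≤ ‖x‖ := euclidean_coord_le_norm x i₀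
        _ = dist x 0 := (dist_zero_right x).symm
        _ < 1 := Metric.mem_ball.1 hx
    simp [hfdef, Set.indicator_of_mem hmem]
  have hφ1 : 0 < φ 1 := φpos 1 one_pos
  have hlow : ∀ (a : EuclideanSpace ℝ (Fin n)) (r : ℝ) (hr : 0 < r)
      (g : EuclideanSpace ℝ (Fin n) → ℝ), (∀ x ∈ Metric.ball a r, g x = 1) →
      ENNReal.ofReal (1/(φ r * t₂)) ≤ omNorm Φ φ g := by
    intro a r hr g hg
    have hφr : 0 < φ r := φpos r hr
    have hlux := ballLux_ge_of_one hmonoΦ ht₂0 ht₂Φ a hr hg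
    have : ENNReal.ofReal (1/(φ r * t₂)) ≤ (ENNReal.ofReal (φ r))⁻¹ * ballLux Φ a r g := by
      calc ENNReal.ofReal (1/(φ r * t₂))
          = ENNReal.ofReal ((φ r)⁻¹ * (1/t₂)) := by congr 1; field_simp
        _ = ENNReal.ofReal ((φ r)⁻¹) * ENNReal.ofReal (1/t₂) := ENNReal.ofReal_mul (by positivity)
        _ = (ENNReal.ofReal (φ r))⁻¹ * ENNReal.ofReal (1/t₂) := by
            rw [ENNReal.ofReal_inv_of_pos hφr]
        _ ≤ (ENNReal.ofReal (φ r))⁻¹ * ballLux Φ a r g := mul_le_mul' le_rfl hlux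
    exact this.trans (le_iSup_of_le a (le_iSup_of_le r (le_iSup_of_le hr le_rfl)))
  have hden0 : omNorm Φ φ f ≠ 0 := by
    intro h0
    have := hlow 0 1 one_pos f hball1
    rw [h0] at this
    have hpos : 0 < ENNReal.ofReal (1/(φ 1 * t₂)) := ENNReal.ofReal_pos.2 (by positivity)
    exact absurd (le_antisymm this zero_le) hpos.ne'
  -- choose δ
  have hεpos : (0:ℝ) < 1 / (2 * M * t₂ * K) := by positivity
  obtain ⟨R, hR⟩ := eventually_atTop.1 (hφtop.eventually_lt_const hεpos)
  set R' : ℝ := max R 1 with hR'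
  have hR'0 : (0:ℝ) < R' := lt_of_lt_of_le one_pos (le_max_right _ _)
  refine ⟨R'⁻¹, by positivity, ?_⟩
  intro α hα hαmono hα1
  have ha1 : 0 < α i₀ := hα i₀
  set ρ : ℝ := (α i₀)⁻¹ with hρdef
  have hρ0 : 0 < ρ := by positivity
  have hρR : R ≤ ρ := by
    have h1 : α i₀ < R'⁻¹ := hα1
    have key : R' * α i₀ < 1 := by
      have := mul_lt_mul_of_pos_left h1 hR'0
      rwa [mul_inv_cancel₀ hR'0.ne'] at this
    have h4 := mul_lt_mul_of_pos_right key (inv_pos.2 ha1)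
    rw [one_mul, mul_assoc, mul_inv_cancel₀ ha1.ne', mul_one] at h4
    exact le_trans (le_max_left _ _) h4.le
  have hφρ : φ ρ < 1 / (2 * M * t₂ * K) := hR ρ hρR
  have hφρ0 : 0 < φ ρ := φpos ρ hρ0
  set ψ := matAction (Matrix.diagonal α) with hψdef
  have hψ1 : ∀ x ∈ Metric.ball (0 : EuclideanSpace ℝ (Fin n)) ρ, (f ∘ ψ) x = 1 := by
    intro x hx
    have hco : ψ x i₀ = α i₀ * x i₀ := by
      simp [hψdef, matAction, Matrix.mulVec_diagonal]
    have hmem : ψ x ∈ T := by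
      show |ψ x i₀| < 1
      rw [hco, abs_mul, abs_of_pos ha1]
      have h1 : |x i₀| ≤ ‖x‖ := euclidean_coord_le_norm x i₀
      have h2 : ‖x‖ < ρ := by rw [← dist_zero_right]; exact Metric.mem_ball.1 hx
      calc α i₀ * |x i₀| < α i₀ * ρ := by nlinarith
        _ = 1 := mul_inv_cancel₀ ha1.ne'
    simp [hfdef, Function.comp, Set.indicator_of_mem hmem]
  have hnum : ENNReal.ofReal (1/(φ ρ * t₂)) ≤ omNorm Φ φ (f ∘ ψ) := hlow 0 ρ hρ0 _ hψ1
  have hq : (0:ℝ) < (1/(φ ρ * t₂))/K :=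
    div_pos (one_div_pos.2 (mul_pos hφρ0 ht₂0)) hK0
  calc ENNReal.ofReal M < ENNReal.ofReal ((1/(φ ρ * t₂))/K) := by
        rw [ENNReal.ofReal_lt_ofReal_iff hq]
        rw [div_div, lt_div_iff₀ (mul_pos (mul_pos hφρ0 ht₂0) hK0)]
        have h3 : φ ρ * t₂ * K < 1/(2*M) := by
          calc φ ρ * t₂ * K = φ ρ * (t₂ * K) := by ring
            _ < (1 / (2 * M * t₂ * K)) * (t₂ * K) :=
                mul_lt_mul_of_pos_right hφρ (mul_pos ht₂0 hK0)
            _ = 1/(2*M) := by field_simp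
        have h4 := mul_lt_mul_of_pos_left h3 hM
        have h5 : M * (1/(2*M)) = 1/2 := by field_simp
        linarith
    _ = ENNReal.ofReal (1/(φ ρ * t₂)) / ENNReal.ofReal K := ENNReal.ofReal_div_of_pos hK0
    _ ≤ omNorm Φ φ (f ∘ ψ) / omNorm Φ φ f := ENNReal.div_le_div hnum hden
    _ ≤ opNorm Φ φ ψ := le_iSup_of_le f (le_iSup_of_le hden0 le_rfl)
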